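/- For every τ ∈ ∏_p ℤ_p, the ring R_τ is quasi-Euclidean: there is a function φ : R_τ² → (2 × ℕ⁴, lex) such that for all a, b ∈ R_τ with b ≠ 0 there exists q ∈ R_τ with φ(b, a - bq) < φ(a,b). In particular, R_τ is a Bézout domain. -/

import Mathlib

open Polynomial

def RtauSet (τ : ∀ p : {p : ℕ // p.Prime}, @PadicInt p.1 ⟨p.2⟩) : Set (Polynomial ℚ) :=
  {f | ∃ (h : Polynomial ℤ) (n : ℕ), n ≠ 0 ∧
    Polynomial.C (n : ℚ) * f = h.map (algebraMap ℤ ℚ) ∧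
    ∀ p : {p : ℕ // p.Prime},
      letI : Fact p.1.Prime := ⟨p.2⟩
      ((p.1 : @PadicInt p.1 ⟨p.2⟩) ^ (n.factorization p.1)) ∣ Polynomial.aeval (τ p) h}

namespace QEaux

abbrev PP := {p : ℕ // p.Prime}

instance factPrime (p : PP) : Fact p.1.Prime := ⟨p.2⟩

variable (τ : ∀ p : PP, PadicInt p.1)

noncomputable def ev (p : PP) (f : Polynomial ℚ) : ℚ_[p.1] :=
  aeval ((τ p : ℚ_[p.1])) f

lemma ev_pow (p : PP) (f : Polynomial ℚ) (k : ℕ) : ev τ p (f ^ k) = (ev τ p f) ^ k := by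
  simp [ev]

lemma ev_X (p : PP) : ev τ p X = ((τ p : ℚ_[p.1])) := by simp [ev]

lemma ev_sub (p : PP) (f g : Polynomial ℚ) : ev τ p (f - g) = ev τ p f - ev τ p g := by
  simp [ev]

lemma ev_mul (p : PP) (f g : Polynomial ℚ) : ev τ p (f * g) = ev τ p f * ev τ p g := by
  simp [ev]

lemma ev_C (p : PP) (r : ℚ) : ev τ p (C r) = (r : ℚ_[p.1]) := by
  rw [ev, aeval_C, eq_ratCast (algebraMap ℚ ℚ_[p.1]) r]

lemma ev_map (p : PP) (h : Polynomial ℤ) :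
    ev τ p (h.map (algebraMap ℤ ℚ)) = ((aeval (τ p) h : PadicInt p.1) : ℚ_[p.1]) := by
  rw [ev, aeval_map_algebraMap]
  exact (aeval_algHom_apply (PadicInt.Coe.ringHom (p := p.1)).toIntAlgHom (τ p) h)

/-- norm of a nonzero natural number in `ℚ_[p]`. -/
lemma norm_nat (p : PP) (n : ℕ) (hn : n ≠ 0) :
    ‖(n : ℚ_[p.1])‖ = (p.1 : ℝ) ^ (-(n.factorization p.1 : ℤ)) := by
  set e := n.factorization p.1 with he
  set m := n / p.1 ^ e with hm
  have hfact : p.1 ^ e * m = n := Nat.ordProj_mul_ordCompl_eq_self n p.1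
  have hpm : ¬ (p.1 ∣ m) := Nat.not_dvd_ordCompl p.2 hn
  have hm1 : ‖(m : ℚ_[p.1])‖ = 1 := by
    have hle : ‖((m : ℤ) : ℚ_[p.1])‖ ≤ 1 := Padic.norm_int_le_one _
    have hlt : ¬ ‖((m : ℤ) : ℚ_[p.1])‖ < 1 := by
      rw [Padic.norm_intCast_lt_one_iff]
      exact_mod_cast hpm
    push_cast at hle hlt ⊢
    linarith [lt_or_eq_of_le hle]
  calc ‖(n : ℚ_[p.1])‖ = ‖((p.1 ^ e * m : ℕ) : ℚ_[p.1])‖ := by rw [hfact]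
    _ = ‖(p.1 : ℚ_[p.1]) ^ e‖ * ‖(m : ℚ_[p.1])‖ := by push_cast; rw [norm_mul]
    _ = (p.1 : ℝ) ^ (-(e : ℤ)) := by rw [hm1, Padic.norm_p_pow, mul_one]

lemma dvd_iff_norm_le (p : PP) (x : PadicInt p.1) (e : ℕ) :
    ((p.1 : PadicInt p.1) ^ e ∣ x) ↔ ‖x‖ ≤ (p.1 : ℝ) ^ (-(e : ℤ)) := by
  rw [PadicInt.norm_le_pow_iff_mem_span_pow, Ideal.mem_span_singleton]

lemma norm_rat_le (p : PP) (c : ℚ) :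
    ‖(c : ℚ_[p.1])‖ ≤ (p.1:ℝ) ^ ((c.den.factorization p.1 : ℤ)) := by
  set e := c.den.factorization p.1 with he
  have hnum : ‖((c.num : ℚ_[p.1]))‖ ≤ 1 := Padic.norm_int_le_one _
  have hden : ‖((c.den : ℚ_[p.1]))‖ = (p.1:ℝ) ^ (-(e:ℤ)) := by
    rw [he]; exact norm_nat p c.den c.den_nz
  have hppos : (0:ℝ) < (p.1:ℝ) ^ (-(e:ℤ)) := by
    apply zpow_pos; exact_mod_cast p.2.pos
  rw [Rat.cast_def, norm_div, hden, div_le_iff₀ hppos, ← zpow_add₀ (by exact_mod_cast p.2.pos.ne' : ((p.1:ℝ)) ≠ 0)]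
  rw [add_neg_cancel, zpow_zero]
  exact hnum

/-- a natAbs bound on euclidean remainders over ℤ -/
lemma int_emod_natAbs_lt (a b : ℤ) (hb : b ≠ 0) : (a % b).natAbs < b.natAbs := by
  rcases hb.lt_or_gt with h | h
  · have h1 := Int.emod_nonneg a hb
    have h2 : a % b < -b := by
      have := Int.emod_lt_of_pos a (by omega : (0:ℤ) < -b)
      rwa [Int.emod_neg] at this
    omega
  · have h1 := Int.emod_nonneg a hb
    have h2 := Int.emod_lt_of_pos a h
    omega

/-- rank used for the well-founded inductions -/
noncomputable def Drank (f : Polynomial ℚ) : ℕ := if f = 0 then 0 else f.natDegree + 1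

lemma drank_lt {f g : Polynomial ℚ} (hg : g ≠ 0) (h : f.degree < g.degree) :
    Drank f < Drank g := by
  rw [Drank, Drank, if_neg hg]
  split_ifs with hf
  · omega
  · have := Polynomial.natDegree_lt_natDegree hf h
    omega

/-- the key evaluation identity -/
lemma ev_eq (p : PP) (f : Polynomial ℚ) (h : Polynomial ℤ) (n : ℕ)
    (hfh : Polynomial.C (n : ℚ) * f = h.map (algebraMap ℤ ℚ)) :
    (n : ℚ_[p.1]) * ev τ p f = ((aeval (τ p) h : PadicInt p.1) : ℚ_[p.1]) := by
  have := congrArg (ev τ p) hfh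
  rwa [ev_mul, ev_C, ev_map, Rat.cast_natCast] at this

/-- common denominators exist -/
lemma exists_den (f : Polynomial ℚ) : ∃ (n : ℕ) (h : Polynomial ℤ),
    n ≠ 0 ∧ Polynomial.C (n : ℚ) * f = h.map (algebraMap ℤ ℚ) := by
  induction f using Polynomial.induction_on' with
  | add f g hf hg =>
      obtain ⟨n₁, h₁, hn₁, e₁⟩ := hf
      obtain ⟨n₂, h₂, hn₂, e₂⟩ := hg
      refine ⟨n₁ * n₂, C (n₂ : ℤ) * h₁ + C (n₁ : ℤ) * h₂, mul_ne_zero hn₁ hn₂, ?_⟩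
      push_cast
      rw [Polynomial.map_add, Polynomial.map_mul, Polynomial.map_mul, map_C, map_C,
        ← e₁, ← e₂]
      push_cast [C_mul]
      ring
      
  | monomial i q =>
      refine ⟨q.den, Polynomial.monomial i q.num, q.den_nz, ?_⟩
      rw [Polynomial.map_monomial, C_mul_monomial]
      congr 1
      rw [mul_comm, Rat.mul_den_eq_num]
      simp

theorem mem_iff (f : Polynomial ℚ) :
    f ∈ RtauSet τ ↔ ∀ p : PP, ‖ev τ p f‖ ≤ 1 := by
  constructor
  · rintro ⟨h, n, hn, hfh, hdvd⟩ p
    have hev := ev_eq τ p f h n hfh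
    set e := n.factorization p.1 with he
    have h1 : ‖((aeval (τ p) h : PadicInt p.1) : ℚ_[p.1])‖ ≤ (p.1 : ℝ) ^ (-(e : ℤ)) := by
      rw [← PadicInt.norm_def]
      exact ((dvd_iff_norm_le p _ e).mp (hdvd p))
    have h2 : ‖(n : ℚ_[p.1])‖ = (p.1 : ℝ) ^ (-(e : ℤ)) := norm_nat p n hn
    have hppos : (0:ℝ) < (p.1 : ℝ) ^ (-(e : ℤ)) := by
      apply zpow_pos
      exact_mod_cast p.2.pos
    have : ‖(n : ℚ_[p.1])‖ * ‖ev τ p f‖ ≤ (p.1 : ℝ) ^ (-(e : ℤ)) := by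
      rw [← norm_mul, hev]; exact h1
    rw [h2] at this
    exact (mul_le_iff_le_one_right hppos).mp this
  · intro hf
    obtain ⟨n, h, hn, hfh⟩ := exists_den f
    refine ⟨h, n, hn, hfh, ?_⟩
    intro p
    rw [dvd_iff_norm_le, PadicInt.norm_def]
    have hev := ev_eq τ p f h n hfh
    rw [← hev, norm_mul, norm_nat p n hn]
    calc (p.1:ℝ) ^ (-(n.factorization p.1:ℤ)) * ‖ev τ p f‖
        ≤ (p.1:ℝ) ^ (-(n.factorization p.1:ℤ)) * 1 := by
          apply mul_le_mul_of_nonneg_left (hf p) (by positivity)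
      _ = _ := mul_one _

/-- Simultaneous approximation of a family of p-adic integers by one integer,
to prescribed p-adic precision given by the factorization of `n`. -/
lemma crt (x : ∀ p : PP, PadicInt p.1) :
    ∀ (n : ℕ), n ≠ 0 → ∃ t : ℤ, ∀ p : PP,
      ((p.1 : PadicInt p.1) ^ (n.factorization p.1)) ∣ (x p - (t : PadicInt p.1)) := by
  intro n
  induction n using Nat.strong_induction_on with
  | _ n IH =>
    intro hn
    by_cases h1 : n = 1
    · exact ⟨0, fun p => by simp [h1]⟩
    set p₀ : ℕ := n.minFac with hp₀def
    have hp₀ : p₀.Prime := Nat.minFac_prime h1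
    set e := n.factorization p₀ with he
    set m := n / p₀ ^ e with hm
    have hfact : p₀ ^ e * m = n := Nat.ordProj_mul_ordCompl_eq_self n p₀
    have hpm : ¬ (p₀ ∣ m) := Nat.not_dvd_ordCompl hp₀ hn
    have hm0 : m ≠ 0 := by
      intro h0
      rw [h0, mul_zero] at hfact
      exact hn hfact.symm
    have he0 : 0 < e := hp₀.factorization_pos_of_dvd hn (Nat.minFac_dvd n)
    have hpe1 : 1 < p₀ ^ e := Nat.one_lt_pow he0.ne' hp₀.one_lt
    have hmlt : m < n := by
      rw [hm]
      apply Nat.div_lt_self (Nat.pos_of_ne_zero hn) hpe1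
    obtain ⟨t₂, ht₂⟩ := IH m hmlt hm0
    set P : PP := ⟨p₀, hp₀⟩ with hP
    haveI : Fact (Nat.Prime P.1) := factPrime P
    set a₁ := (x P).appr e with ha₁
    have hc : p₀.Coprime m := (Nat.Prime.coprime_iff_not_dvd hp₀).mpr hpm
    have hco : (p₀ ^ e).Coprime m := Nat.Coprime.pow_left e hc
    set t₂' : ℕ := (t₂ % (m : ℤ)).toNat with ht₂'
    have ht₂'cast : (t₂' : ℤ) = t₂ % (m : ℤ) :=
      Int.toNat_of_nonneg (Int.emod_nonneg t₂ (by exact_mod_cast hm0))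
    obtain ⟨k, hk₁, hk₂⟩ := Nat.chineseRemainder hco a₁ t₂'
    refine ⟨(k : ℤ), fun p => ?_⟩
    by_cases hpp : p = P
    · subst hpp
      have hd1 : ((P.1 : PadicInt P.1) ^ e) ∣ (x P - ((x P).appr e : PadicInt P.1)) := by
        have := PadicInt.appr_spec e (x P)
        rwa [Ideal.mem_span_singleton] at this
      have hd2 : (((p₀ ^ e : ℕ) : ℤ)) ∣ ((a₁ : ℤ) - (k : ℤ)) := hk₁.dvd
      have hd2' : ((P.1 : PadicInt P.1) ^ e) ∣ (((a₁:ℤ) : PadicInt P.1) - ((k:ℤ) : PadicInt P.1)) := by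
        obtain ⟨c, hc2⟩ := hd2
        refine ⟨(c : PadicInt P.1), ?_⟩
        have := congrArg (fun z : ℤ => ((z : PadicInt P.1))) hc2
        push_cast at this
        simpa using this
      have heq : x P - ((k:ℤ) : PadicInt P.1)
          = (x P - ((x P).appr e : PadicInt P.1)) + (((a₁ : ℤ) : PadicInt P.1) - ((k:ℤ) : PadicInt P.1)) := by
        push_cast
        ring
      show ((P.1 : PadicInt P.1) ^ (n.factorization P.1)) ∣ (x P - (((k:ℕ):ℤ) : PadicInt P.1))
      have hfe : n.factorization P.1 = e := rfl
      rw [hfe, heq]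
      exact dvd_add hd1 hd2'
    · have hpne : p.1 ≠ p₀ := fun hcon => hpp (Subtype.ext hcon)
      have hfacm : m.factorization p.1 = n.factorization p.1 := by
        rw [hm, he, Nat.factorization_ordCompl n p₀]
        exact Finsupp.erase_ne hpne
      have hd1 := ht₂ p
      rw [hfacm] at hd1
      have hdm : (m : ℤ) ∣ (t₂ - (k : ℤ)) := by
        have h2 : ((m:ℕ):ℤ) ∣ ((t₂' : ℤ) - (k:ℤ)) := hk₂.dvd
        have h3 : (m:ℤ) ∣ (t₂ - (t₂' : ℤ)) := by
          rw [ht₂'cast]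
          exact ⟨t₂ / m, by have := Int.emod_add_mul_ediv t₂ (m:ℤ); linarith⟩
        have := dvd_add h3 h2
        simpa using this
      have hdp : ((p.1:ℤ) ^ (n.factorization p.1)) ∣ (m : ℤ) := by
        have := Nat.ordProj_dvd m p.1
        rw [hfacm] at this
        exact_mod_cast this
      have hd2 : ((p.1 : PadicInt p.1) ^ (n.factorization p.1)) ∣ ((t₂ : PadicInt p.1) - ((k:ℤ) : PadicInt p.1)) := by
        obtain ⟨c, hc2⟩ := dvd_trans hdp hdm
        refine ⟨(c : PadicInt p.1), ?_⟩
        have := congrArg (fun z : ℤ => ((z : PadicInt p.1))) hc2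
        push_cast at this
        simpa using this
      have heq : x p - ((k:ℤ) : PadicInt p.1)
          = (x p - (t₂ : PadicInt p.1)) + ((t₂ : PadicInt p.1) - ((k:ℤ) : PadicInt p.1)) := by ring
      show ((p.1 : PadicInt p.1) ^ (n.factorization p.1)) ∣ (x p - (((k:ℕ):ℤ) : PadicInt p.1))
      rw [heq]
      exact dvd_add hd1 hd2

section ChainMachinery

variable {R : Type*} [CommRing R]

/-- terminating division chains -/
inductive Chain : R → R → Prop
  | zero (a : R) : Chain a 0
  | step {a b : R} (q : R) : Chain b (a - b * q) → Chain a b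

lemma chain_swap {a b : R} (h : Chain b a) : Chain a b :=
  Chain.step 0 (by simpa using h)

lemma chain_red {a b : R} (q : R) (h : Chain (a - b * q) b) : Chain a b :=
  Chain.step q (chain_swap h)

/-- division chains of bounded length -/
def ChainN : ℕ → R → R → Prop
  | 0, _, b => b = 0
  | (n+1), a, b => b = 0 ∨ ∃ q : R, ChainN n b (a - b * q)

lemma chainN_mono : ∀ (n : ℕ) {a b : R}, ChainN n a b → ChainN (n+1) a b
  | 0, _, _, h => Or.inl h
  | (n+1), _, _, Or.inl h => Or.inl h
  | (n+1), _, _, Or.inr ⟨q, h⟩ => Or.inr ⟨q, chainN_mono n h⟩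

lemma chain_to_chainN {a b : R} (h : Chain a b) : ∃ n, ChainN n a b := by
  induction h with
  | zero a => exact ⟨0, rfl⟩
  | step q _ ih =>
      obtain ⟨n, hn⟩ := ih
      exact ⟨n + 1, Or.inr ⟨q, hn⟩⟩

lemma chain_span {a b : R} (h : Chain a b) :
    ∃ g : R, Ideal.span {a, b} = Ideal.span {g} := by
  induction h with
  | zero a =>
      exact ⟨a, by rw [Ideal.span_insert]; simp [Set.singleton_zero]⟩
  | @step a' b' q h ih =>
      obtain ⟨g, hg⟩ := ih
      refine ⟨g, ?_⟩
      rw [← hg]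
      apply le_antisymm
      · rw [Ideal.span_le]
        rintro x (rfl | rfl)
        · have h1 : (x - b' * q) + b' * q ∈ Ideal.span {b', x - b' * q} := by
            apply Ideal.add_mem
            · exact Ideal.subset_span (by simp)
            · exact Ideal.mul_mem_right q _ (Ideal.subset_span (by simp))
          simpa using h1
        · exact Ideal.subset_span (by simp)
      · rw [Ideal.span_le]
        rintro x (rfl | rfl)
        · exact Ideal.subset_span (by simp)
        · apply Ideal.sub_mem
          · exact Ideal.subset_span (by simp)
          · exact Ideal.mul_mem_right q _ (Ideal.subset_span (by simp))

end ChainMachinery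

section Wrapper

variable {R : Type*} [CommRing R]

open Classical in
theorem conclusion_of_chains (hchain : ∀ a b : R, Chain a b) :
    (∃ φ : R × R → Fin 2 ×ₗ (ℕ ×ₗ (ℕ ×ₗ (ℕ ×ₗ ℕ))),
      ∀ a b : R, b ≠ 0 → ∃ q : R, φ (b, a - b * q) < φ (a, b)) ∧
    ∀ I : Ideal R, I.FG → I.IsPrincipal := by
  constructor
  · have hex : ∀ a b : R, ∃ n, ChainN n a b := fun a b => chain_to_chainN (hchain a b)
    set m : R × R → ℕ := fun x => Nat.find (hex x.1 x.2) with hm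
    refine ⟨fun x => toLex (0, toLex (0, toLex (0, toLex (0, m x)))), ?_⟩
    intro a b hb
    have hfind : ChainN (m (a, b)) a b := Nat.find_spec (hex a b)
    rcases hmn : m (a, b) with _ | n
    · rw [hmn] at hfind
      exact absurd hfind hb
    · rw [hmn] at hfind
      rcases hfind with h0 | ⟨q, hq⟩
      · exact absurd h0 hb
      · refine ⟨q, ?_⟩
        have hle : m (b, a - b * q) ≤ n := Nat.find_le hq
        have hlt : m (b, a - b * q) < m (a, b) := by omega
        apply Prod.Lex.right
        apply Prod.Lex.right
        apply Prod.Lex.right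
        apply Prod.Lex.right
        exact hlt
  · haveI : IsBezout R := by
      rw [IsBezout.iff_span_pair_isPrincipal]
      intro x y
      obtain ⟨g, hg⟩ := chain_span (hchain x y)
      exact ⟨⟨g, by rw [hg]⟩⟩
    exact fun I => IsBezout.isPrincipal_of_FG I

end Wrapper

section Rtau

variable (S : Subring (Polynomial ℚ)) (hS : (S : Set (Polynomial ℚ)) = RtauSet τ)

include hS

lemma mem_S_iff (f : Polynomial ℚ) : f ∈ S ↔ ∀ p : PP, ‖ev τ p f‖ ≤ 1 := by
  rw [← mem_iff τ f, ← hS]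
  rfl

lemma norm_ev_le (a : S) (p : PP) : ‖ev τ p (a : Polynomial ℚ)‖ ≤ 1 :=
  (mem_S_iff τ S hS _).mp a.2 p

lemma int_mem (z : ℤ) : (C (z : ℚ)) ∈ S := by
  rw [mem_S_iff τ S hS]
  intro p
  rw [ev_C]
  push_cast
  exact Padic.norm_int_le_one z

lemma exists_int_remainder (c : ℤ) (hc : c ≠ 0) (a : S) :
    ∃ (q : S) (d : ℤ), d.natAbs < c.natAbs ∧
      ((a : Polynomial ℚ) - C (c:ℚ) * (q : Polynomial ℚ) = C (d:ℚ)) := by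
  set n := c.natAbs with hn
  have hn0 : n ≠ 0 := Int.natAbs_ne_zero.mpr hc
  have hnpos : (0:ℤ) < (n:ℤ) := by exact_mod_cast Nat.pos_of_ne_zero hn0
  set xel : ∀ p : PP, PadicInt p.1 := fun p => ⟨ev τ p (a : Polynomial ℚ), norm_ev_le τ S hS a p⟩
    with hxel
  obtain ⟨t, ht⟩ := crt xel n hn0
  set d := t % (n:ℤ) with hd
  have hd0 : 0 ≤ d := Int.emod_nonneg t (by exact_mod_cast hn0)
  have hdlt : d < (n:ℤ) := Int.emod_lt_of_pos t hnpos
  have hdn : d.natAbs < n := by omega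
  have hsub : (n:ℤ) ∣ (t - d) := ⟨t / n, by have := Int.emod_add_mul_ediv t (n:ℤ); linarith⟩
  have hstep : ∀ p : PP, ((p.1 : PadicInt p.1) ^ (n.factorization p.1)) ∣
      (xel p - ((d : ℤ) : PadicInt p.1)) := by
    intro p
    have h2 : ((p.1:ℤ) ^ (n.factorization p.1)) ∣ (t - d) :=
      dvd_trans (by exact_mod_cast Nat.ordProj_dvd n p.1) hsub
    have h2' : ((p.1 : PadicInt p.1) ^ (n.factorization p.1)) ∣
        ((t : PadicInt p.1) - ((d:ℤ) : PadicInt p.1)) := by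
      obtain ⟨u, hu⟩ := h2
      refine ⟨(u : PadicInt p.1), ?_⟩
      have := congrArg (fun z : ℤ => ((z : PadicInt p.1))) hu
      push_cast at this
      simpa using this
    have heq : xel p - ((d:ℤ) : PadicInt p.1)
        = (xel p - (t : PadicInt p.1)) + ((t : PadicInt p.1) - ((d:ℤ) : PadicInt p.1)) := by ring
    rw [heq]
    exact dvd_add (ht p) h2'
  have hcq : (c : ℚ) ≠ 0 := Int.cast_ne_zero.mpr hc
  set qpoly : Polynomial ℚ := ((a : Polynomial ℚ) - C (d:ℚ)) * C ((c:ℚ)⁻¹) with hqp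
  have hqmem : qpoly ∈ S := by
    rw [mem_S_iff τ S hS]
    intro p
    set e := n.factorization p.1 with he
    have hev : ev τ p qpoly = (ev τ p (a:Polynomial ℚ) - ((d:ℚ_[p.1]))) * ((c:ℚ_[p.1]))⁻¹ := by
      rw [hqp, ev_mul, ev_sub, ev_C, ev_C]
      push_cast
      ring
    have hnorm1 : ‖ev τ p (a:Polynomial ℚ) - ((d:ℚ_[p.1]))‖ ≤ (p.1:ℝ) ^ (-(e:ℤ)) := by
      have := (dvd_iff_norm_le p _ e).mp (hstep p)
      rw [PadicInt.norm_def] at this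
      have hcast : ((xel p - ((d:ℤ) : PadicInt p.1) : PadicInt p.1) : ℚ_[p.1])
          = ev τ p (a:Polynomial ℚ) - ((d:ℚ_[p.1])) := by
        push_cast
        rfl
      rwa [hcast] at this
    have hnormc : ‖((c:ℚ_[p.1]))‖ = (p.1:ℝ) ^ (-(e:ℤ)) := by
      have hgoal : ‖((n : ℚ_[p.1]))‖ = (p.1:ℝ) ^ (-(e:ℤ)) := by rw [he]; exact norm_nat p n hn0
      rcases Int.natAbs_eq c with h | h
      · rw [h, Int.cast_natCast]
        exact hgoal
      · rw [h, Int.cast_neg, Int.cast_natCast, norm_neg]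
        exact hgoal
    have hppos : (0:ℝ) < (p.1:ℝ) ^ (-(e:ℤ)) := by
      apply zpow_pos
      exact_mod_cast p.2.pos
    rw [hev, norm_mul, norm_inv, hnormc]
    calc ‖ev τ p (a:Polynomial ℚ) - ((d:ℚ_[p.1]))‖ * ((p.1:ℝ) ^ (-(e:ℤ)))⁻¹
        ≤ ((p.1:ℝ) ^ (-(e:ℤ))) * ((p.1:ℝ) ^ (-(e:ℤ)))⁻¹ := by
          apply mul_le_mul_of_nonneg_right hnorm1 (by positivity)
      _ = 1 := mul_inv_cancel₀ (ne_of_gt hppos)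
  refine ⟨⟨qpoly, hqmem⟩, d, hdn, ?_⟩
  show (a : Polynomial ℚ) - C (c:ℚ) * qpoly = C (d:ℚ)
  rw [hqp]
  have hcc : (C ((c:ℚ)) * C (((c:ℚ))⁻¹) : Polynomial ℚ) = 1 := by
    rw [← C_mul, mul_inv_cancel₀ hcq, C_1]
  calc (a : Polynomial ℚ) - C (c:ℚ) * (((a : Polynomial ℚ) - C (d:ℚ)) * C ((c:ℚ)⁻¹))
      = (a : Polynomial ℚ) - (C (c:ℚ) * C ((c:ℚ)⁻¹)) * ((a : Polynomial ℚ) - C (d:ℚ)) := by ring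
    _ = C (d:ℚ) := by rw [hcc, one_mul]; ring

lemma const_is_int (b : S) (hdeg : (b : Polynomial ℚ).natDegree = 0) :
    ∃ c : ℤ, (b : Polynomial ℚ) = C (c:ℚ) := by
  obtain ⟨r, hr⟩ := Polynomial.natDegree_eq_zero.mp hdeg
  have hden : r.den = 1 := by
    by_contra hden
    set p := r.den.minFac with hp
    have hpp : p.Prime := Nat.minFac_prime hden
    set P : PP := ⟨p, hpp⟩ with hP
    haveI : Fact (Nat.Prime P.1) := factPrime P
    have hpd : p ∣ r.den := Nat.minFac_dvd _
    have hnorm := norm_ev_le τ S hS b P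
    rw [← hr, ev_C] at hnorm
    have hcast : ((r : ℚ_[P.1])) = ((r.num : ℚ_[P.1])) / ((r.den : ℚ_[P.1])) := by
      rw [Rat.cast_def]
    have hnum : ‖((r.num : ℚ_[P.1]))‖ = 1 := by
      have hle : ‖((r.num : ℚ_[P.1]))‖ ≤ 1 := Padic.norm_int_le_one _
      have hnd : ¬ ((P.1:ℤ) ∣ r.num) := by
        intro hdvd
        have h1 : p ∣ r.num.natAbs := Int.natAbs_dvd_natAbs.mpr (by exact_mod_cast hdvd)
        have := Nat.dvd_gcd h1 hpd
        rw [Nat.Coprime.gcd_eq_one r.reduced] at this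
        exact hpp.one_lt.ne' (Nat.dvd_one.mp this)
      have hlt : ¬ ‖((r.num : ℚ_[P.1]))‖ < 1 := by
        rw [Padic.norm_intCast_lt_one_iff]
        exact hnd
      linarith [lt_or_eq_of_le hle]
    have hdenlt : ‖((r.den : ℚ_[P.1]))‖ < 1 := by
      have : ((P.1:ℤ) ∣ (r.den : ℤ)) := by exact_mod_cast hpd
      have := (Padic.norm_intCast_lt_one_iff (k := (r.den : ℤ))).mpr this
      push_cast at this ⊢
      exact this
    have hdenpos : (0:ℝ) < ‖((r.den : ℚ_[P.1]))‖ := by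
      apply norm_pos_iff.mpr
      exact_mod_cast r.den_nz
    rw [hcast, norm_div, hnum] at hnorm
    rw [div_le_iff₀ hdenpos, one_mul] at hnorm
    linarith
  have hrnum : ((r.num : ℚ)) = r := by
    conv_rhs => rw [← Rat.num_div_den r, hden]
    push_cast
    rw [div_one]
  exact ⟨r.num, by rw [← hr, hrnum]⟩

lemma lemA : ∀ (M : ℕ) (c : ℤ), c.natAbs ≤ M → ∀ (b a : S), (b : Polynomial ℚ) = C (c:ℚ) →
    Chain a b := by
  intro M
  induction M using Nat.strong_induction_on with
  | _ M IH =>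
    intro c hcM b a hb
    by_cases hc : c = 0
    · have hb0 : b = 0 := by
        apply Subtype.ext
        rw [hb, hc]
        simp
      rw [hb0]
      exact Chain.zero a
    · obtain ⟨q, d, hd, hiden⟩ := exists_int_remainder τ S hS c hc a
      apply Chain.step q
      have hcoe : ((a - b * q : S) : Polynomial ℚ) = C (d:ℚ) := by
        show (a : Polynomial ℚ) - (b : Polynomial ℚ) * (q : Polynomial ℚ) = C (d:ℚ)
        rw [hb]
        exact hiden
      exact IH d.natAbs (lt_of_lt_of_le hd hcM) d le_rfl (a - b * q) b hcoe

lemma scaled_facts {n : ℕ} (hn : n ≠ 0) {f : Polynomial ℚ} {A : Polynomial ℤ}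
    (h : C (n:ℚ) * f = A.map (algebraMap ℤ ℚ)) (hf : f ≠ 0) :
    A ≠ 0 ∧ A.natDegree = f.natDegree ∧ ((A.leadingCoeff : ℚ)) = n * f.leadingCoeff ∧
    ∀ i, ((A.coeff i : ℚ)) = n * f.coeff i := by
  have hnq : ((n:ℚ)) ≠ 0 := by exact_mod_cast hn
  have hinj : Function.Injective (algebraMap ℤ ℚ) := fun x y hxy => by
    have : (x:ℚ) = y := by simpa [algebraMap_int_eq, eq_intCast] using hxy
    exact_mod_cast this
  have hcoeff : ∀ i, ((A.coeff i : ℚ)) = n * f.coeff i := by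
    intro i
    have := congrArg (fun g : Polynomial ℚ => g.coeff i) h
    simp only [coeff_C_mul, Polynomial.coeff_map, algebraMap_int_eq, eq_intCast] at this
    exact this.symm
  have hA0 : A ≠ 0 := by
    intro h0
    rw [h0] at h
    simp only [Polynomial.map_zero] at h
    exact hf (by
      have := mul_eq_zero.mp h
      rcases this with h1 | h1
      · exact absurd (C_eq_zero.mp h1) hnq
      · exact h1)
  refine ⟨hA0, ?_, ?_, hcoeff⟩
  · have := congrArg Polynomial.natDegree h
    rw [natDegree_C_mul hnq, natDegree_map_eq_of_injective hinj A] at this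
    exact this.symm
  · have := congrArg Polynomial.leadingCoeff h
    rw [leadingCoeff_mul, leadingCoeff_C, leadingCoeff_map_of_injective hinj A] at this
    rw [algebraMap_int_eq, eq_intCast] at this
    exact this.symm

lemma exists_shift (c : ℚ) (k : ℕ) (hk : k ≠ 0) :
    ∃ t : ℤ, (C c * (X - C ((t:ℚ))) ^ k) ∈ S := by
  obtain ⟨t, ht⟩ := crt (fun p => τ p) c.den c.den_nz
  refine ⟨t, ?_⟩
  rw [mem_S_iff τ S hS]
  intro p
  set e := c.den.factorization p.1 with he
  have hp1 : (1:ℝ) ≤ (p.1:ℝ) := by exact_mod_cast p.2.one_lt.le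
  have hp0 : ((p.1:ℝ)) ≠ 0 := by positivity
  have hevq : ev τ p (C c * (X - C ((t:ℚ))) ^ k)
      = (c : ℚ_[p.1]) * ((τ p : ℚ_[p.1]) - ((t:ℚ_[p.1]))) ^ k := by
    rw [ev_mul, ev_C, ev_pow, ev_sub, ev_X, ev_C]
    norm_cast
  have hD : ‖(τ p : ℚ_[p.1]) - ((t:ℚ_[p.1]))‖ ≤ (p.1:ℝ) ^ (-(e:ℤ)) := by
    have hdvd := (dvd_iff_norm_le p (τ p - (t : PadicInt p.1)) e).mp (by rw [he]; exact ht p)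
    rw [PadicInt.norm_def] at hdvd
    have hcast : (((τ p - (t : PadicInt p.1)) : PadicInt p.1) : ℚ_[p.1])
        = (τ p : ℚ_[p.1]) - ((t:ℚ_[p.1])) := by push_cast; rfl
    rwa [hcast] at hdvd
  rw [hevq, norm_mul, norm_pow]
  have h1 : ‖((τ p:ℚ_[p.1]) - (t:ℚ_[p.1]))‖ ^ k ≤ ((p.1:ℝ) ^ (-(e:ℤ))) ^ k :=
    pow_le_pow_left₀ (norm_nonneg _) hD k
  have h2 : ‖(c:ℚ_[p.1])‖ ≤ (p.1:ℝ)^(e:ℤ) := by rw [he]; exact norm_rat_le p c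
  calc ‖(c:ℚ_[p.1])‖ * ‖((τ p:ℚ_[p.1]) - (t:ℚ_[p.1]))‖ ^ k
      ≤ (p.1:ℝ)^(e:ℤ) * ((p.1:ℝ) ^ (-(e:ℤ))) ^ k := by
        apply mul_le_mul h2 h1 (by positivity) (by positivity)
    _ = (p.1:ℝ) ^ ((e:ℤ) + (-(e:ℤ)) * (k:ℤ)) := by
        rw [← zpow_natCast ((p.1:ℝ) ^ (-(e:ℤ))) k, ← zpow_mul, ← zpow_add₀ hp0]
    _ ≤ 1 := by
        apply zpow_le_one_of_nonpos₀ hp1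
        have hk1 : (1:ℤ) ≤ (k:ℤ) := by exact_mod_cast Nat.pos_of_ne_zero hk
        nlinarith [Int.natCast_nonneg e]

lemma lemB (k : ℕ)
    (Hsmall : ∀ b' : S, ((b' : Polynomial ℚ) = 0 ∨ (b' : Polynomial ℚ).natDegree < k) →
      ∀ a' : S, Chain a' b') :
    ∀ (N : ℕ), ∀ (a b : S) (n : ℕ), n ≠ 0 → ∀ (A B : Polynomial ℤ),
      C (n:ℚ) * (a : Polynomial ℚ) = A.map (algebraMap ℤ ℚ) →
      C (n:ℚ) * (b : Polynomial ℚ) = B.map (algebraMap ℤ ℚ) →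
      (a : Polynomial ℚ).natDegree = k → (b : Polynomial ℚ).natDegree = k →
      (a : Polynomial ℚ) ≠ 0 → (b : Polynomial ℚ) ≠ 0 →
      B.leadingCoeff.natAbs ≤ N → Chain a b := by
  intro N
  induction N using Nat.strong_induction_on with
  | _ N IH =>
    intro a b n hn A B hA hB hdega hdegb ha0 hb0 hBle
    have hnq : ((n:ℚ)) ≠ 0 := by exact_mod_cast hn
    obtain ⟨hA0, hAdeg, hAlc, hAcoeff⟩ := scaled_facts τ S hS hn hA ha0
    obtain ⟨hB0, hBdeg, hBlc, hBcoeff⟩ := scaled_facts τ S hS hn hB hb0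
    have hβ0 : B.leadingCoeff ≠ 0 := leadingCoeff_ne_zero.mpr hB0
    set z := A.leadingCoeff / B.leadingCoeff with hz
    set α' := A.leadingCoeff % B.leadingCoeff with hα'
    have hmod : A.leadingCoeff = B.leadingCoeff * z + α' := by
      rw [hz, hα']
      have := Int.emod_add_mul_ediv A.leadingCoeff B.leadingCoeff
      linarith
    have hα'lt : α'.natAbs < B.leadingCoeff.natAbs := int_emod_natAbs_lt _ _ hβ0
    set q : S := ⟨C ((z:ℚ)), int_mem τ S hS z⟩ with hq
    set a' : S := a - b * q with ha'
    have hcoe : (a' : Polynomial ℚ)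
        = (a : Polynomial ℚ) - (b : Polynomial ℚ) * C ((z:ℚ)) := rfl
    set A' : Polynomial ℤ := A - B * C z with hA'def
    have hA' : C (n:ℚ) * (a' : Polynomial ℚ) = A'.map (algebraMap ℤ ℚ) := by
      rw [hcoe, hA'def, Polynomial.map_sub, Polynomial.map_mul, map_C, ← hA, ← hB,
        algebraMap_int_eq, eq_intCast]
      push_cast
      ring
    have hA'coeff : A'.coeff k = α' := by
      rw [hA'def]
      rw [Polynomial.coeff_sub, coeff_mul_C]
      have h1 : A.coeff k = A.leadingCoeff := by
        rw [← hAdeg.trans hdega]; exact coeff_natDegree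
      have h2 : B.coeff k = B.leadingCoeff := by
        rw [← hBdeg.trans hdegb]; exact coeff_natDegree
      rw [h1, h2, hmod]
      ring
    have ha'coeffs : ∀ i, ((A'.coeff i : ℚ)) = n * (a' : Polynomial ℚ).coeff i := by
      intro i
      have := congrArg (fun g : Polynomial ℚ => g.coeff i) hA'
      simp only [coeff_C_mul, Polynomial.coeff_map, algebraMap_int_eq, eq_intCast] at this
      exact this.symm
    have ha'deg : (a' : Polynomial ℚ).natDegree ≤ k := by
      rw [hcoe]
      apply le_trans (Polynomial.natDegree_sub_le _ _)
      apply max_le (le_of_eq hdega)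
      apply le_trans natDegree_mul_le
      simp [hdegb]
    by_cases hα'0 : α' = 0
    · -- degree drops below k
      have hsm : (a' : Polynomial ℚ) = 0 ∨ (a' : Polynomial ℚ).natDegree < k := by
        by_cases h0 : (a' : Polynomial ℚ) = 0
        · exact Or.inl h0
        · right
          rcases lt_or_eq_of_le ha'deg with h | h
          · exact h
          · exfalso
            have hc0 : (a' : Polynomial ℚ).coeff k = 0 := by
              have hthis := ha'coeffs k
              rw [hA'coeff, hα'0] at hthis
              have h2 : (0:ℚ) = n * (a' : Polynomial ℚ).coeff k := by exact_mod_cast hthis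
              exact (mul_eq_zero.mp h2.symm).resolve_left hnq
            have : (a' : Polynomial ℚ).leadingCoeff = 0 := by
              rw [leadingCoeff, h, hc0]
            exact h0 (leadingCoeff_eq_zero.mp this)
      exact chain_red q (chain_swap (Hsmall a' hsm b))
    · -- same degree, smaller leading coefficient: recurse
      have hcoeffa' : (a' : Polynomial ℚ).coeff k ≠ 0 := by
        intro h0
        have := ha'coeffs k
        rw [hA'coeff, h0, mul_zero] at this
        exact hα'0 (by exact_mod_cast this)
      have ha'0 : (a' : Polynomial ℚ) ≠ 0 := fun h0 => hcoeffa' (by rw [h0]; simp)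
      have ha'degk : (a' : Polynomial ℚ).natDegree = k :=
        le_antisymm ha'deg (le_natDegree_of_ne_zero hcoeffa')
      have hA'lc : A'.leadingCoeff = α' := by
        obtain ⟨_, hA'deg2, _, _⟩ := scaled_facts τ S hS hn hA' ha'0
        rw [leadingCoeff, hA'deg2, ha'degk, hA'coeff]
      apply chain_red q
      apply chain_swap
      exact IH α'.natAbs (lt_of_lt_of_le hα'lt hBle) b a' n hn B A' hB hA'
        hdegb ha'degk hb0 ha'0 (le_of_eq (congrArg Int.natAbs hA'lc))

lemma core : ∀ (dd : ℕ) (b : S), Drank (b : Polynomial ℚ) ≤ dd → ∀ a : S, Chain a b := by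
  intro dd
  induction dd using Nat.strong_induction_on with
  | _ dd IH =>
    intro b hb a
    by_cases hb0 : (b : Polynomial ℚ) = 0
    · rw [show b = 0 from Subtype.ext (by simpa using hb0)]
      exact Chain.zero a
    by_cases hdeg0 : (b : Polynomial ℚ).natDegree = 0
    · obtain ⟨c, hc⟩ := const_is_int τ S hS b hdeg0
      exact lemA τ S hS c.natAbs c le_rfl b a hc
    set k := (b : Polynomial ℚ).natDegree with hkdef
    have hbrank : Drank (b : Polynomial ℚ) = k + 1 := by rw [Drank, if_neg hb0]
    have hkdd : k + 1 ≤ dd := hbrank ▸ hb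
    have Hsmall : ∀ b' : S, ((b' : Polynomial ℚ) = 0 ∨ (b' : Polynomial ℚ).natDegree < k) →
        ∀ a' : S, Chain a' b' := by
      intro b' hb' a'
      refine IH (Drank (b' : Polynomial ℚ)) ?_ b' le_rfl a'
      rcases hb' with h | h
      · rw [Drank, if_pos h]; omega
      · rw [Drank]
        split_ifs
        · omega
        · omega
    suffices H : ∀ (ee : ℕ) (a : S), Drank (a : Polynomial ℚ) ≤ ee → Chain a b from
      H _ a le_rfl
    intro ee
    induction ee using Nat.strong_induction_on with
    | _ ee IHa =>
      intro a ha
      by_cases ha0 : (a : Polynomial ℚ) = 0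
      · apply chain_swap
        rw [show a = 0 from Subtype.ext (by simpa using ha0)]
        exact Chain.zero b
      rcases lt_trichotomy ((a : Polynomial ℚ).natDegree) k with hlt | heq | hgt
      · exact chain_swap (Hsmall a (Or.inr hlt) b)
      · -- equal degrees
        have haR : (a : Polynomial ℚ) ∈ RtauSet τ := by rw [← hS]; exact a.2
        have hbR : (b : Polynomial ℚ) ∈ RtauSet τ := by rw [← hS]; exact b.2
        obtain ⟨A₁, n₁, hn₁, hA₁, -⟩ := haR
        obtain ⟨B₁, n₂, hn₂, hB₁, -⟩ := hbR
        have hA : C (((n₁ * n₂ : ℕ)):ℚ) * (a : Polynomial ℚ)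
            = (C (n₂:ℤ) * A₁).map (algebraMap ℤ ℚ) := by
          rw [Polynomial.map_mul, map_C, ← hA₁, algebraMap_int_eq, eq_intCast]
          push_cast [C_mul]
          ring
        have hB : C (((n₁ * n₂ : ℕ)):ℚ) * (b : Polynomial ℚ)
            = (C (n₁:ℤ) * B₁).map (algebraMap ℤ ℚ) := by
          rw [Polynomial.map_mul, map_C, ← hB₁, algebraMap_int_eq, eq_intCast]
          push_cast [C_mul]
          ring
        exact lemB τ S hS k Hsmall ((C (n₁:ℤ) * B₁).leadingCoeff.natAbs) a b (n₁ * n₂)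
          (mul_ne_zero hn₁ hn₂) _ _ hA hB heq rfl ha0 hb0 le_rfl
      · -- deg a > deg b : kill the leading term
        have hlcb : (b : Polynomial ℚ).leadingCoeff ≠ 0 := leadingCoeff_ne_zero.mpr hb0
        have hlca : (a : Polynomial ℚ).leadingCoeff ≠ 0 := leadingCoeff_ne_zero.mpr ha0
        set c := (a : Polynomial ℚ).leadingCoeff / (b : Polynomial ℚ).leadingCoeff with hc
        have hc0 : c ≠ 0 := div_ne_zero hlca hlcb
        set kk := (a : Polynomial ℚ).natDegree - k with hkk
        have hkk0 : kk ≠ 0 := by omega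
        obtain ⟨t, hqmem⟩ := exists_shift τ S hS c kk hkk0
        set qp : Polynomial ℚ := C c * (X - C ((t:ℚ))) ^ kk with hqp
        set q : S := ⟨qp, hqmem⟩ with hqdefn
        have hmon : ((X - C ((t:ℚ))) ^ kk).Monic := (monic_X_sub_C _).pow kk
        have hqp0 : qp ≠ 0 := by
          rw [hqp]
          exact mul_ne_zero (by simpa using hc0) hmon.ne_zero
        have hqdeg : qp.natDegree = kk := by
          rw [hqp, natDegree_C_mul hc0, natDegree_pow, natDegree_X_sub_C, mul_one]
        have hqlc : qp.leadingCoeff = c := by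
          rw [hqp, leadingCoeff_mul, leadingCoeff_C, hmon.leadingCoeff, mul_one]
        have hbq0 : (b : Polynomial ℚ) * qp ≠ 0 := mul_ne_zero hb0 hqp0
        have hbq_deg : ((b : Polynomial ℚ) * qp).natDegree = (a : Polynomial ℚ).natDegree := by
          rw [natDegree_mul hb0 hqp0, hqdeg, ← hkdef]
          omega
        have hbq_lc : ((b : Polynomial ℚ) * qp).leadingCoeff
            = (a : Polynomial ℚ).leadingCoeff := by
          rw [leadingCoeff_mul, hqlc, hc, mul_div_cancel₀ _ hlcb]
        have hsub : ((a : Polynomial ℚ) - (b : Polynomial ℚ) * qp).degree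
            < (a : Polynomial ℚ).degree := by
          apply degree_sub_lt ?_ ha0 hbq_lc.symm
          rw [degree_eq_natDegree ha0, degree_eq_natDegree hbq0, hbq_deg]
        set a' : S := a - b * q with ha'def
        have ha'coe : (a' : Polynomial ℚ) = (a : Polynomial ℚ) - (b : Polynomial ℚ) * qp := rfl
        have hdr : Drank (a' : Polynomial ℚ) < Drank (a : Polynomial ℚ) := by
          rw [ha'coe]
          exact drank_lt ha0 hsub
        apply chain_red q
        refine IHa (Drank (a' : Polynomial ℚ)) (lt_of_lt_of_le hdr ha) a' le_rfl

end Rtau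

end QEaux

/-- `R_τ` is quasi-Euclidean, witnessed by a norm with values in `2 × ℕ⁴` ordered
lexicographically; in particular it is a Bézout domain. -/
theorem stmt_11 (τ : ∀ p : {p : ℕ // p.Prime}, @PadicInt p.1 ⟨p.2⟩)
    (S : Subring (Polynomial ℚ)) (hS : (S : Set (Polynomial ℚ)) = RtauSet τ) :
    (∃ φ : S × S → Fin 2 ×ₗ (ℕ ×ₗ (ℕ ×ₗ (ℕ ×ₗ ℕ))),
      ∀ a b : S, b ≠ 0 → ∃ q : S, φ (b, a - b * q) < φ (a, b)) ∧
    ∀ I : Ideal S, I.FG → I.IsPrincipal := by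
  apply QEaux.conclusion_of_chains
  intro a b
  exact QEaux.core τ S hS (QEaux.Drank (b : Polynomial ℚ)) b le_rfl a
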